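/- For r ≥ 2 and s ≥ 3, if r and s are not both even then adim_2(P_r □ C_s) = 1: when s is odd the vertex (u_1,v_0) is a 2-ARS, and when s is even (so r odd) the vertex (u_{(r+1)/2}, v_0) is a 2-ARS. -/
import Mathlib


open SimpleGraph

/-- Two vertices have the same distances to every vertex of `S`. -/
def sameDists {V : Type*} (G : SimpleGraph V) (S : Set V) (x y : V) : Prop :=
  ∀ z ∈ S, G.dist x z = G.dist y z

/-- The equivalence class (outside `S`) of `x` under the equal-distance relation `R_S`. -/
def cls {V : Type*} (G : SimpleGraph V) (S : Set V) (x : V) : Set V :=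
  {y | y ∉ S ∧ sameDists G S x y}

/-- `S` is a `k`-antiresolving set: `S` is nonempty, does not cover `V`, and the minimum
size of an equivalence class of `R_S` on `V ∖ S` equals `k`. -/
def IsKARS {V : Type*} (G : SimpleGraph V) (k : ℕ) (S : Set V) : Prop :=
  S.Nonempty ∧ Sᶜ.Nonempty ∧
    (∀ x ∉ S, k ≤ (cls G S x).ncard) ∧ ∃ x ∉ S, (cls G S x).ncard = k

/-- The `k`-metric antidimension: the smallest cardinality of a `k`-antiresolving set,
`⊤` (i.e. `+∞`) if none exists. -/
noncomputable def adim {V : Type*} (G : SimpleGraph V) (k : ℕ) : ℕ∞ :=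
  sInf ((fun S => (S.ncard : ℕ∞)) '' {S : Set V | IsKARS G k S})



section DistTools

variable {V : Type*} {G : SimpleGraph V}

lemma walk_lower (f : V → ℕ) (hf : ∀ ⦃u v : V⦄, G.Adj u v → f u ≤ f v + 1) :
    ∀ {x y : V} (w : G.Walk x y), f x ≤ f y + w.length := by
  intro x y w
  induction w with
  | nil => simp
  | cons h w ih =>
    have := hf h
    simp only [Walk.length_cons]
    omega

lemma dist_lower (f : V → ℕ) (hf : ∀ ⦃u v : V⦄, G.Adj u v → f u ≤ f v + 1)
    {x y : V} (hy : f y = 0) (hr : G.Reachable x y) : f x ≤ G.dist x y := by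
  obtain ⟨w, hw⟩ := hr.exists_walk_length_eq_dist
  have := walk_lower f hf w
  omega

lemma exists_walk_le (f : V → V → ℕ)
    (h0 : ∀ u v, f u v = 0 → u = v)
    (hstep : ∀ u v, 0 < f u v → ∃ u', G.Adj u u' ∧ f u' v < f u v) :
    ∀ (n : ℕ) (u v : V), f u v ≤ n → ∃ w : G.Walk u v, w.length ≤ f u v := by
  intro n
  induction n with
  | zero =>
    intro u v h
    obtain rfl := h0 u v (by omega)
    exact ⟨Walk.nil, by simp⟩
  | succ n ih =>
    intro u v h
    rcases Nat.eq_zero_or_pos (f u v) with h0' | hp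
    · obtain rfl := h0 u v h0'
      exact ⟨Walk.nil, by simp⟩
    · obtain ⟨u', ha, hlt⟩ := hstep u v hp
      obtain ⟨w, hw⟩ := ih u' v (by omega)
      exact ⟨Walk.cons ha w, by simp only [Walk.length_cons]; omega⟩

lemma dist_upper (f : V → V → ℕ)
    (h0 : ∀ u v, f u v = 0 → u = v)
    (hstep : ∀ u v, 0 < f u v → ∃ u', G.Adj u u' ∧ f u' v < f u v)
    (u v : V) : G.dist u v ≤ f u v := by
  obtain ⟨w, hw⟩ := exists_walk_le f h0 hstep (f u v) u v le_rfl
  exact le_trans (dist_le w) hw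

end DistTools

section BoxProd

variable {α β : Type*} {G : SimpleGraph α} {H : SimpleGraph β}

lemma boxProd_walk_ge (hG : G.Connected) (hH : H.Connected) :
    ∀ {x y : α × β} (w : (G □ H).Walk x y),
      G.dist x.1 y.1 + H.dist x.2 y.2 ≤ w.length := by
  intro x y w
  induction w with
  | nil => simp
  | @cons x u y h w ih =>
    simp only [Walk.length_cons]
    rcases h with ⟨h1, h2⟩ | ⟨h1, h2⟩
    · have t1 : G.dist x.1 y.1 ≤ G.dist x.1 u.1 + G.dist u.1 y.1 := hG.dist_triangle
      have t2 : G.dist x.1 u.1 = 1 := dist_eq_one_iff_adj.mpr h1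
      rw [h2]
      omega
    · have t1 : H.dist x.2 y.2 ≤ H.dist x.2 u.2 + H.dist u.2 y.2 := hH.dist_triangle
      have t2 : H.dist x.2 u.2 = 1 := dist_eq_one_iff_adj.mpr h1
      rw [h2]
      omega

lemma boxProd_dist (hG : G.Connected) (hH : H.Connected) (x y : α × β) :
    (G □ H).dist x y = G.dist x.1 y.1 + H.dist x.2 y.2 := by
  obtain ⟨x1, x2⟩ := x
  obtain ⟨y1, y2⟩ := y
  apply le_antisymm
  · obtain ⟨w1, hw1⟩ := hG.exists_walk_length_eq_dist x1 y1
    obtain ⟨w2, hw2⟩ := hH.exists_walk_length_eq_dist x2 y2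
    have hd := dist_le ((w1.boxProdLeft H x2).append (w2.boxProdRight G y1))
    rw [Walk.length_append] at hd
    have l1 : (w1.boxProdLeft H x2).length = w1.length := Walk.length_map _ _
    have l2 : (w2.boxProdRight G y1).length = w2.length := Walk.length_map _ _
    dsimp only
    omega
  · obtain ⟨w, hw⟩ := ((hG.boxProd hH).exists_walk_length_eq_dist (x1, x2) (y1, y2))
    have := boxProd_walk_ge hG hH w
    dsimp only at this ⊢
    omega

end BoxProd

section PathCycle

/-- cycle metric on values -/
def cd (s a b : ℕ) : ℕ := min (Nat.dist a b) (s - Nat.dist a b)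

lemma mod_succ {s a : ℕ} (ha : a < s) : (a + 1) % s = if a + 1 = s then 0 else a + 1 := by
  split
  · next h => rw [h, Nat.mod_self]
  · next h => exact Nat.mod_eq_of_lt (by omega)

lemma mod_pred {s a : ℕ} (ha : a < s) :
    (a + s - 1) % s = if a = 0 then s - 1 else a - 1 := by
  split
  · next h =>
    rw [h, show 0 + s - 1 = s - 1 by omega]
    exact Nat.mod_eq_of_lt (by omega)
  · next h =>
    rw [Nat.mod_eq_sub_mod (by omega), show a + s - 1 - s = a - 1 by omega]
    exact Nat.mod_eq_of_lt (by omega)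

lemma cd_lip {s a b c : ℕ} (hs : 3 ≤ s) (ha : a < s) (hb : b < s) (hc : c < s)
    (h : a = (b + 1) % s ∨ b = (a + 1) % s) : cd s a c ≤ cd s b c + 1 := by
  rw [mod_succ hb, mod_succ ha] at h
  split_ifs at h <;> (simp only [cd, Nat.dist] at *; omega)

lemma cd_step {s a b : ℕ} (hs : 3 ≤ s) (ha : a < s) (hb : b < s) (hab : a ≠ b) :
    cd s ((a + 1) % s) b < cd s a b ∨ cd s ((a + s - 1) % s) b < cd s a b := by
  rw [mod_succ ha, mod_pred ha]
  split_ifs <;> (simp only [cd, Nat.dist] at *; omega)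

lemma pathGraph_dist_eq {r : ℕ} (i j : Fin r) :
    (pathGraph r).dist i j = Nat.dist i.val j.val := by
  apply le_antisymm
  · apply dist_upper (fun u v : Fin r => Nat.dist u.val v.val)
    · intro u v h
      exact Fin.ext (Nat.eq_of_dist_eq_zero h)
    · intro u v h
      rcases Nat.lt_or_ge u.val v.val with hlt | hge
      · refine ⟨⟨u.val + 1, by omega⟩, ?_, ?_⟩
        · exact pathGraph_adj.mpr (Or.inl rfl)
        · simp only [Nat.dist] at *; omega
      · have hne : u.val ≠ v.val := by simp only [Nat.dist] at h; omega
        refine ⟨⟨u.val - 1, by omega⟩, ?_, ?_⟩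
        · exact pathGraph_adj.mpr (Or.inr (by simp; omega))
        · simp only [Nat.dist] at *; omega
  · apply dist_lower (fun u : Fin r => Nat.dist u.val j.val)
    · intro u v h
      rcases pathGraph_adj.mp h with h1 | h1 <;> (simp only [Nat.dist]; omega)
    · simp [Nat.dist]
    · exact pathGraph_preconnected r i j

lemma cyc_adj {s : ℕ} (hs : 3 ≤ s) (u v : Fin s) :
    (cycleGraph s).Adj u v ↔ (u.val = (v.val + 1) % s ∨ v.val = (u.val + 1) % s) := by
  haveI : NeZero s := ⟨by omega⟩
  have h1 : (1 : Fin s).val = 1 := by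
    rw [Fin.val_one']; exact Nat.mod_eq_of_lt (by omega)
  have key : ∀ u v : Fin s, ((u - v).val = 1 ↔ u.val = (v.val + 1) % s) := by
    intro u v
    rw [show (1 : ℕ) = (1 : Fin s).val from h1.symm, ← Fin.ext_iff, sub_eq_iff_eq_add',
      Fin.ext_iff, Fin.val_add, h1]
  rw [cycleGraph_adj', key, key]

lemma cycleGraph_dist_eq {s : ℕ} (hs : 3 ≤ s) (u v : Fin s) :
    (cycleGraph s).dist u v = cd s u.val v.val := by
  apply le_antisymm
  · apply dist_upper (fun u v : Fin s => cd s u.val v.val)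
    · intro a b h
      apply Fin.ext
      have := a.isLt; have := b.isLt
      simp only [cd, Nat.dist] at h
      omega
    · intro a b h
      have hab : a.val ≠ b.val := by
        intro he
        simp only [cd, he, Nat.dist] at h
        omega
      rcases cd_step hs a.isLt b.isLt hab with hc | hc
      · refine ⟨⟨(a.val + 1) % s, Nat.mod_lt _ (by omega)⟩, ?_, hc⟩
        exact (cyc_adj hs _ _).mpr (Or.inr rfl)
      · refine ⟨⟨(a.val + s - 1) % s, Nat.mod_lt _ (by omega)⟩, ?_, hc⟩
        apply (cyc_adj hs _ _).mpr
        left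
        show a.val = ((a.val + s - 1) % s + 1) % s
        rw [mod_pred a.isLt]
        split_ifs with h0
        · rw [show s - 1 + 1 = s by omega, Nat.mod_self, h0]
        · rw [show a.val - 1 + 1 = a.val by omega, Nat.mod_eq_of_lt a.isLt]
  · apply dist_lower (fun w : Fin s => cd s w.val v.val)
    · intro x y hxy
      exact cd_lip hs x.isLt y.isLt v.isLt ((cyc_adj hs x y).mp hxy)
    · simp [cd, Nat.dist]
    · exact cycleGraph_preconnected u v

end PathCycle

section Arith

lemma min_resolve {s b : ℕ} (hb : b < s) :
    ∃ c, min b (s - b) = c ∧ 2 * c ≤ s ∧ (c = 0 ↔ b = 0) ∧ (b = c ∨ b = s - c) := by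
  rcases le_total b (s - b) with h | h
  · exact ⟨b, min_eq_left h, by omega, by omega, by omega⟩
  · exact ⟨s - b, min_eq_right h, by omega, by omega, by omega⟩

lemma odd_pair {r s m a b : ℕ} (hr : 2 ≤ r) (hm : s = 2 * m + 1) (hm1 : 1 ≤ m)
    (ha : a < r) (hb : b < s) (hab : ¬(a = 0 ∧ b = 0)) :
    ∃ a' b₁ b₂ : ℕ, a' < r ∧ b₁ < s ∧ b₂ < s ∧ b₁ ≠ b₂ ∧ b₁ ≠ 0 ∧ b₂ ≠ 0 ∧
      Nat.dist a' 0 + cd s b₁ 0 = Nat.dist a 0 + cd s b 0 ∧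
      Nat.dist a' 0 + cd s b₂ 0 = Nat.dist a 0 + cd s b 0 := by
  simp only [cd, Nat.dist, Nat.sub_zero, Nat.zero_sub, Nat.add_zero]
  obtain ⟨c, hc, hc2, hc0, hcb⟩ := min_resolve hb
  rw [hc]
  obtain ⟨γ, hγ⟩ : ∃ γ, γ = min (a + c) m := ⟨_, rfl⟩
  refine ⟨a + c - γ, γ, s - γ, ?_, ?_, ?_, ?_, ?_, ?_, ?_, ?_⟩ <;> omega

lemma odd_uniq {r s m a b : ℕ} (hr : 2 ≤ r) (hm : s = 2 * m + 1) (hm1 : 1 ≤ m)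
    (ha : a < r) (hb : b < s)
    (heq : Nat.dist a 0 + cd s b 0 = Nat.dist (r - 1) 0 + cd s m 0) :
    a = r - 1 ∧ (b = m ∨ b = m + 1) := by
  simp only [cd, Nat.dist, Nat.sub_zero, Nat.zero_sub, Nat.add_zero] at heq
  obtain ⟨c, hc, hc2, hc0, hcb⟩ := min_resolve hb
  rw [hc] at heq
  omega

lemma odd_eq {r s m : ℕ} (hr : 2 ≤ r) (hm : s = 2 * m + 1) (hm1 : 1 ≤ m) :
    Nat.dist (r - 1) 0 + cd s (m + 1) 0 = Nat.dist (r - 1) 0 + cd s m 0 := by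
  simp only [cd, Nat.dist, Nat.sub_zero, Nat.zero_sub, Nat.add_zero]
  omega

lemma even_pair {r s p m a b : ℕ} (hp : r = 2 * p + 1) (hp1 : 1 ≤ p)
    (hm : s = m + m) (hm2 : 2 ≤ m)
    (ha : a < r) (hb : b < s) (hab : ¬(a = (r - 1) / 2 ∧ b = 0)) :
    ∃ a₁ b₁ a₂ b₂ : ℕ, a₁ < r ∧ b₁ < s ∧ a₂ < r ∧ b₂ < s ∧ ¬(a₁ = a₂ ∧ b₁ = b₂) ∧
      ¬(a₁ = (r - 1) / 2 ∧ b₁ = 0) ∧ ¬(a₂ = (r - 1) / 2 ∧ b₂ = 0) ∧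
      Nat.dist a₁ ((r - 1) / 2) + cd s b₁ 0 = Nat.dist a ((r - 1) / 2) + cd s b 0 ∧
      Nat.dist a₂ ((r - 1) / 2) + cd s b₂ 0 = Nat.dist a ((r - 1) / 2) + cd s b 0 := by
  have hq : (r - 1) / 2 = p := by omega
  simp only [cd, Nat.dist, Nat.sub_zero, Nat.zero_sub, Nat.add_zero, hq]
  rw [hq] at hab
  obtain ⟨c, hc, hc2, hc0, hcb⟩ := min_resolve hb
  rw [hc]
  obtain ⟨d, hd⟩ : ∃ d, d = (a - p + (p - a)) + c := ⟨_, rfl⟩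
  rcases le_or_gt d (p + m - 1) with hcase | hcase
  · obtain ⟨γ, hγ⟩ : ∃ γ, γ = min d (m - 1) := ⟨_, rfl⟩
    refine ⟨p + (d - γ), γ, p + (d - γ), s - γ, ?_, ?_, ?_, ?_, ?_, ?_, ?_, ?_, ?_⟩ <;> omega
  · refine ⟨0, m, r - 1, m, ?_, ?_, ?_, ?_, ?_, ?_, ?_, ?_, ?_⟩ <;> omega

lemma even_uniq {r s p m a b : ℕ} (hp : r = 2 * p + 1) (hp1 : 1 ≤ p)
    (hm : s = m + m) (hm2 : 2 ≤ m) (ha : a < r) (hb : b < s)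
    (heq : Nat.dist a ((r - 1) / 2) + cd s b 0
      = Nat.dist 0 ((r - 1) / 2) + cd s m 0) :
    (a = 0 ∨ a = r - 1) ∧ b = m := by
  simp only [cd, Nat.dist, Nat.sub_zero, Nat.zero_sub, Nat.add_zero] at heq
  obtain ⟨c, hc, hc2, hc0, hcb⟩ := min_resolve hb
  rw [hc] at heq
  omega

lemma even_eq {r s p m : ℕ} (hp : r = 2 * p + 1) (hp1 : 1 ≤ p)
    (hm : s = m + m) (hm2 : 2 ≤ m) :
    Nat.dist (r - 1) ((r - 1) / 2) + cd s m 0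
      = Nat.dist 0 ((r - 1) / 2) + cd s m 0 := by
  simp only [cd, Nat.dist, Nat.sub_zero, Nat.zero_sub, Nat.add_zero]
  omega

end Arith

section KARSTools

lemma cls_singleton {V : Type*} (G : SimpleGraph V) (z x : V) :
    cls G {z} x = {y | y ≠ z ∧ G.dist x z = G.dist y z} := by
  ext y
  simp [cls, sameDists]

lemma isKARS_singleton {V : Type*} [Fintype V] (G : SimpleGraph V) (z : V)
    (h2 : ∀ x : V, x ≠ z → ∃ y₁ y₂ : V, y₁ ≠ y₂ ∧ y₁ ≠ z ∧ y₂ ≠ z ∧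
      G.dist y₁ z = G.dist x z ∧ G.dist y₂ z = G.dist x z)
    (hex : ∃ y₁ y₂ : V, y₁ ≠ y₂ ∧ y₁ ≠ z ∧ y₂ ≠ z ∧
      G.dist y₂ z = G.dist y₁ z ∧
      ∀ y, y ≠ z → G.dist y z = G.dist y₁ z → y = y₁ ∨ y = y₂) :
    IsKARS G 2 {z} := by
  obtain ⟨y₁, y₂, hne, h1z, h2z, hd, huniq⟩ := hex
  refine ⟨⟨z, rfl⟩, ⟨y₁, h1z⟩, ?_, ?_⟩
  · intro x hx
    rw [Set.mem_singleton_iff] at hx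
    obtain ⟨w₁, w₂, wne, w1z, w2z, wd1, wd2⟩ := h2 x hx
    have hsub : ({w₁, w₂} : Set V) ⊆ cls G {z} x := by
      rw [cls_singleton]
      rintro y (rfl | rfl)
      · exact ⟨w1z, wd1.symm⟩
      · exact ⟨w2z, wd2.symm⟩
    calc 2 = ({w₁, w₂} : Set V).ncard := (Set.ncard_pair wne).symm
      _ ≤ _ := Set.ncard_le_ncard hsub (Set.toFinite _)
  · refine ⟨y₁, by simpa using h1z, ?_⟩
    have hcl : cls G {z} y₁ = {y₁, y₂} := by
      rw [cls_singleton]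
      ext y
      constructor
      · rintro ⟨hyz, hdy⟩
        exact huniq y hyz hdy.symm
      · rintro (rfl | rfl)
        · exact ⟨h1z, rfl⟩
        · exact ⟨h2z, hd.symm⟩
    rw [hcl, Set.ncard_pair hne]

lemma adim_eq_one {V : Type*} [Fintype V] (G : SimpleGraph V) (k : ℕ)
    (hK : ∃ z : V, IsKARS G k {z}) : adim G k = 1 := by
  obtain ⟨z, hz⟩ := hK
  apply le_antisymm
  · exact sInf_le ⟨{z}, hz, by simp⟩
  · apply le_sInf
    rintro x ⟨S, hS, rfl⟩
    have h1 : 1 ≤ S.ncard := (Set.ncard_pos (Set.toFinite S)).mpr hS.1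
    show (1 : ℕ∞) ≤ (S.ncard : ℕ∞)
    exact_mod_cast h1

end KARSTools

/-- For `r ≥ 2`, `s ≥ 3` with `r, s` not both even, `adim_2(P_r □ C_s) = 1`: when `s`
is odd the vertex `(u_1, v_0)` is a 2-ARS, and when `s` is even (so `r` is odd) the
vertex `(u_{(r+1)/2}, v_0)` is a 2-ARS. -/
theorem stmt14 (r s : ℕ) (hr : 2 ≤ r) (hs : 3 ≤ s) (h : ¬(Even r ∧ Even s)) :
    adim ((pathGraph r).boxProd (cycleGraph s)) 2 = 1 ∧
    (Odd s → IsKARS ((pathGraph r).boxProd (cycleGraph s)) 2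
      ({(⟨0, by omega⟩, ⟨0, by omega⟩)} : Set (Fin r × Fin s))) ∧
    (Even s → IsKARS ((pathGraph r).boxProd (cycleGraph s)) 2
      ({(⟨(r - 1) / 2, by omega⟩, ⟨0, by omega⟩)} : Set (Fin r × Fin s))) := by
  have hrc : (pathGraph r).Connected := by
    obtain ⟨t, rfl⟩ : ∃ t, r = t + 1 := ⟨r - 1, by omega⟩
    exact pathGraph_connected t
  have hsc : (cycleGraph s).Connected := by
    obtain ⟨t, rfl⟩ : ∃ t, s = t + 1 := ⟨s - 1, by omega⟩
    exact cycleGraph_connected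
  have hdist : ∀ x y : Fin r × Fin s,
      ((pathGraph r).boxProd (cycleGraph s)).dist x y
        = Nat.dist x.1.val y.1.val + cd s x.2.val y.2.val := fun x y => by
    rw [show ((pathGraph r).boxProd (cycleGraph s)) = ((pathGraph r) □ (cycleGraph s)) from rfl,
      boxProd_dist hrc hsc, pathGraph_dist_eq, cycleGraph_dist_eq hs]
  have hoddcase : Odd s → IsKARS ((pathGraph r).boxProd (cycleGraph s)) 2
      ({(⟨0, by omega⟩, ⟨0, by omega⟩)} : Set (Fin r × Fin s)) := by
    intro hso
    obtain ⟨m, hm⟩ := hso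
    have hm1 : 1 ≤ m := by omega
    apply isKARS_singleton
    · intro x hx
      have hxx : ¬(x.1.val = 0 ∧ x.2.val = 0) := by
        rintro ⟨h1, h2⟩
        exact hx (Prod.ext_iff.mpr ⟨Fin.ext h1, Fin.ext h2⟩)
      obtain ⟨a', b₁, b₂, ha', hb₁, hb₂, hbne, hb10, hb20, he1, he2⟩ :=
        odd_pair hr hm hm1 x.1.isLt x.2.isLt hxx
      refine ⟨(⟨a', ha'⟩, ⟨b₁, hb₁⟩), (⟨a', ha'⟩, ⟨b₂, hb₂⟩), ?_, ?_, ?_, ?_, ?_⟩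
      · simp only [ne_eq, Prod.mk.injEq, Fin.mk.injEq, not_and]
        intro _
        exact hbne
      · simp only [ne_eq, Prod.mk.injEq, Fin.mk.injEq, not_and]
        intro _
        exact hb10
      · simp only [ne_eq, Prod.mk.injEq, Fin.mk.injEq, not_and]
        intro _
        exact hb20
      · rw [hdist, hdist]
        exact he1
      · rw [hdist, hdist]
        exact he2
    · refine ⟨(⟨r - 1, by omega⟩, ⟨m, by omega⟩), (⟨r - 1, by omega⟩, ⟨m + 1, by omega⟩),
        ?_, ?_, ?_, ?_, ?_⟩
      · simp only [ne_eq, Prod.mk.injEq, Fin.mk.injEq, not_and]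
        intro _
        omega
      · simp only [ne_eq, Prod.mk.injEq, Fin.mk.injEq, not_and]
        intro _
        omega
      · simp only [ne_eq, Prod.mk.injEq, Fin.mk.injEq, not_and]
        intro _
        omega
      · rw [hdist, hdist]
        exact odd_eq hr hm hm1
      · intro y hyz hdy
        rw [hdist, hdist] at hdy
        obtain ⟨h1, h2⟩ := odd_uniq hr hm hm1 y.1.isLt y.2.isLt hdy
        rcases h2 with h2 | h2
        · exact Or.inl (Prod.ext_iff.mpr ⟨Fin.ext h1, Fin.ext h2⟩)
        · exact Or.inr (Prod.ext_iff.mpr ⟨Fin.ext h1, Fin.ext h2⟩)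
  have hevencase : Even s → IsKARS ((pathGraph r).boxProd (cycleGraph s)) 2
      ({(⟨(r - 1) / 2, by omega⟩, ⟨0, by omega⟩)} : Set (Fin r × Fin s)) := by
    intro hse
    have hro : Odd r := Nat.not_even_iff_odd.mp (fun hre => h ⟨hre, hse⟩)
    obtain ⟨p, hp⟩ := hro
    obtain ⟨m, hm⟩ := hse
    have hp1 : 1 ≤ p := by omega
    have hm2 : 2 ≤ m := by omega
    apply isKARS_singleton
    · intro x hx
      have hxx : ¬(x.1.val = (r - 1) / 2 ∧ x.2.val = 0) := by
        rintro ⟨h1, h2⟩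
        exact hx (Prod.ext_iff.mpr ⟨Fin.ext h1, Fin.ext h2⟩)
      obtain ⟨a₁, b₁, a₂, b₂, ha₁, hb₁, ha₂, hb₂, hne, hz1, hz2, he1, he2⟩ :=
        even_pair hp hp1 hm hm2 x.1.isLt x.2.isLt hxx
      refine ⟨(⟨a₁, ha₁⟩, ⟨b₁, hb₁⟩), (⟨a₂, ha₂⟩, ⟨b₂, hb₂⟩), ?_, ?_, ?_, ?_, ?_⟩
      · simp only [ne_eq, Prod.mk.injEq, Fin.mk.injEq, not_and]
        intro u v
        exact hne ⟨u, v⟩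
      · simp only [ne_eq, Prod.mk.injEq, Fin.mk.injEq, not_and]
        intro u v
        exact hz1 ⟨u, v⟩
      · simp only [ne_eq, Prod.mk.injEq, Fin.mk.injEq, not_and]
        intro u v
        exact hz2 ⟨u, v⟩
      · rw [hdist, hdist]
        exact he1
      · rw [hdist, hdist]
        exact he2
    · refine ⟨(⟨0, by omega⟩, ⟨m, by omega⟩), (⟨r - 1, by omega⟩, ⟨m, by omega⟩),
        ?_, ?_, ?_, ?_, ?_⟩
      · simp only [ne_eq, Prod.mk.injEq, Fin.mk.injEq, not_and]
        omega
      · simp only [ne_eq, Prod.mk.injEq, Fin.mk.injEq, not_and]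
        intro _
        omega
      · simp only [ne_eq, Prod.mk.injEq, Fin.mk.injEq, not_and]
        intro _
        omega
      · rw [hdist, hdist]
        exact even_eq hp hp1 hm hm2
      · intro y hyz hdy
        rw [hdist, hdist] at hdy
        obtain ⟨h1, h2⟩ := even_uniq hp hp1 hm hm2 y.1.isLt y.2.isLt hdy
        rcases h1 with h1 | h1
        · exact Or.inl (Prod.ext_iff.mpr ⟨Fin.ext h1, Fin.ext h2⟩)
        · exact Or.inr (Prod.ext_iff.mpr ⟨Fin.ext h1, Fin.ext h2⟩)
  refine ⟨?_, hoddcase, hevencase⟩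
  rcases Nat.even_or_odd s with hse | hso
  · exact adim_eq_one _ 2 ⟨_, hevencase hse⟩
  · exact adim_eq_one _ 2 ⟨_, hoddcase hso⟩
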